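/- In a regular ordered semigroup S, a nonempty subset A is a bi-ideal of S if and only if A = (RL] for some right ideal R and left ideal L of S. -/

import Mathlib

open Pointwise

variable {S : Type*} [Semigroup S] [PartialOrder S]
  [CovariantClass S S (· * ·) (· ≤ ·)]
  [CovariantClass S S (Function.swap (· * ·)) (· ≤ ·)]

/-- The downward closure `(H] = {t : t ≤ h for some h ∈ H}`. -/
def ocl (H : Set S) : Set S := {t | ∃ h ∈ H, t ≤ h}
/-- Principal left ideal `L(a) = (a ∪ Sa]`. -/
def pL (a : S) : Set S := ocl ({a} ∪ Set.univ * {a})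
/-- Principal right ideal `R(a) = (a ∪ aS]`. -/
def pR (a : S) : Set S := ocl ({a} ∪ {a} * Set.univ)
/-- Principal bi-ideal `B(a) = (a ∪ a² ∪ aSa]`. -/
def pB (a : S) : Set S := ocl ({a} ∪ {a * a} ∪ {a} * Set.univ * {a})
def LIdeal (I : Set S) : Prop := I.Nonempty ∧ Set.univ * I ⊆ I ∧ ocl I = I
def RIdeal (I : Set S) : Prop := I.Nonempty ∧ I * Set.univ ⊆ I ∧ ocl I = I
def BIdeal (B : Set S) : Prop :=
  B.Nonempty ∧ B * B ⊆ B ∧ B * Set.univ * B ⊆ B ∧ ocl B = B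
def MinBIdeal (B : Set S) : Prop :=
  BIdeal B ∧ ∀ K : Set S, BIdeal K → K ⊆ B → K = B
def MinLIdeal (I : Set S) : Prop :=
  LIdeal I ∧ ∀ K : Set S, LIdeal K → K ⊆ I → K = I
def MinRIdeal (I : Set S) : Prop :=
  RIdeal I ∧ ∀ K : Set S, RIdeal K → K ⊆ I → K = I
def OrdRegular (S : Type*) [Semigroup S] [PartialOrder S] : Prop :=
  ∀ a : S, ∃ s : S, a ≤ a * s * a
def ComplRegular (S : Type*) [Semigroup S] [PartialOrder S] : Prop :=
  ∀ a : S, ∃ s : S, a ≤ a * a * s * (a * a)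
/-- Green's H relation. -/
def HGreen (a b : S) : Prop := pL a = pL b ∧ pR a = pR b
/-- The relation β : `a β b` iff `B(a) = B(b)`. -/
def betaRel (a b : S) : Prop := pB a = pB b

lemma ocl_mono {H K : Set S} (h : H ⊆ K) : ocl H ⊆ ocl K :=
  fun _ ⟨a, ha, hx⟩ => ⟨a, h ha, hx⟩

lemma subset_ocl (H : Set S) : H ⊆ ocl H := fun x hx => ⟨x, hx, le_refl x⟩

lemma ocl_ocl (H : Set S) : ocl (ocl H) = ocl H := by
  apply subset_antisymm
  · rintro x ⟨a, ⟨b, hb, hab⟩, hx⟩; exact ⟨b, hb, hx.trans hab⟩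
  · exact subset_ocl _

lemma ocl_mul_ocl (H K : Set S) : ocl H * ocl K ⊆ ocl (H * K) := by
  rintro x ⟨a, ⟨h, hh, hah⟩, b, ⟨k, hk, hbk⟩, rfl⟩
  exact ⟨h * k, Set.mul_mem_mul hh hk, mul_le_mul' hah hbk⟩

theorem stmt5 (h : OrdRegular S) (A : Set S) (hA : A.Nonempty) :
    BIdeal A ↔ ∃ R L : Set S, RIdeal R ∧ LIdeal L ∧ A = ocl (R * L) := by
  constructor
  · rintro ⟨-, hmul, hbi, hcl⟩
    obtain ⟨a0, ha0⟩ := hA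
    refine ⟨ocl (A * Set.univ), ocl (Set.univ * A), ?_, ?_, ?_⟩
    · refine ⟨⟨a0 * a0, subset_ocl _ (Set.mul_mem_mul ha0 (Set.mem_univ _))⟩, ?_, ocl_ocl _⟩
      calc ocl (A * (Set.univ : Set S)) * (Set.univ : Set S)
          ⊆ ocl (A * (Set.univ : Set S)) * ocl (Set.univ : Set S) :=
            Set.mul_subset_mul_left (subset_ocl _)
        _ ⊆ ocl (A * Set.univ * Set.univ) := ocl_mul_ocl _ _
        _ ⊆ ocl (A * Set.univ) := by
            apply ocl_mono
            rw [mul_assoc]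
            exact Set.mul_subset_mul_left (Set.subset_univ _)
    · refine ⟨⟨a0 * a0, subset_ocl _ (Set.mul_mem_mul (Set.mem_univ _) ha0)⟩, ?_, ocl_ocl _⟩
      calc (Set.univ : Set S) * ocl ((Set.univ : Set S) * A)
          ⊆ ocl (Set.univ : Set S) * ocl ((Set.univ : Set S) * A) :=
            Set.mul_subset_mul_right (subset_ocl _)
        _ ⊆ ocl (Set.univ * (Set.univ * A)) := ocl_mul_ocl _ _
        _ ⊆ ocl (Set.univ * A) := by
            apply ocl_mono
            rw [← mul_assoc]
            exact Set.mul_subset_mul_right (Set.subset_univ _)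
    · apply subset_antisymm
      · intro a ha
        obtain ⟨s, hs⟩ := h a
        refine ⟨a * s * a, Set.mul_mem_mul ?_ ?_, hs⟩
        · exact subset_ocl _ (Set.mul_mem_mul ha (Set.mem_univ s))
        · exact ⟨a * s * a, Set.mul_mem_mul (Set.mem_univ (a * s)) ha, hs⟩
      · calc ocl (ocl (A * Set.univ) * ocl (Set.univ * A))
            ⊆ ocl (ocl (A * Set.univ * (Set.univ * A))) := ocl_mono (ocl_mul_ocl _ _)
          _ = ocl (A * Set.univ * (Set.univ * A)) := ocl_ocl _
          _ ⊆ ocl A := by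
              apply ocl_mono
              intro x hx
              apply hbi
              rw [← mul_assoc] at hx
              rcases hx with ⟨y, hy, b, hb, rfl⟩
              refine Set.mul_mem_mul ?_ hb
              rw [mul_assoc] at hy
              rcases hy with ⟨c, hc, d, -, rfl⟩
              exact Set.mul_mem_mul hc (Set.mem_univ _)
          _ = A := hcl
  · rintro ⟨R, L, ⟨-, hRmul, -⟩, ⟨-, hLmul, -⟩, rfl⟩
    have key : ∀ X : Set S, R * X * L ⊆ R * L := by
      intro X
      refine Set.mul_subset_mul_right ?_
      calc R * X ⊆ R * Set.univ := Set.mul_subset_mul_left (Set.subset_univ _)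
        _ ⊆ R := hRmul
    refine ⟨hA, ?_, ?_, ocl_ocl _⟩
    · calc ocl (R * L) * ocl (R * L) ⊆ ocl (R * L * (R * L)) := ocl_mul_ocl _ _
        _ ⊆ ocl (R * L) := by
            apply ocl_mono
            have : R * L * (R * L) = R * (L * R) * L := by simp only [mul_assoc]
            rw [this]; exact key _
    · calc ocl (R * L) * (Set.univ : Set S) * ocl (R * L)
          ⊆ ocl (R * L) * ocl Set.univ * ocl (R * L) :=
            Set.mul_subset_mul_right (Set.mul_subset_mul_left (subset_ocl _))
        _ ⊆ ocl (R * L * Set.univ) * ocl (R * L) :=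
            Set.mul_subset_mul_right (ocl_mul_ocl _ _)
        _ ⊆ ocl (R * L * Set.univ * (R * L)) := ocl_mul_ocl _ _
        _ ⊆ ocl (R * L) := by
            apply ocl_mono
            have : R * L * Set.univ * (R * L) = R * (L * (Set.univ * R)) * L := by
              simp only [mul_assoc]
            rw [this]; exact key _
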